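/- arXiv:math/0307333 — 4 statements merged into one kernel-verified Lean document; each statement's English description precedes it below -/
import Mathlib

section
/- Let p ∈ ℝ with p ≠ 0 and p ≠ 1, let q satisfy 1/p + 1/q = 1, and define F(x) = (N/p)|det x|^(p/N) and G(y) = (N/q)|det y|^(q/N) on N×N matrices. If x has det x ≠ 0 and y is the derivative matrix of F at x (i.e., y_k^n = ∂F/∂x_n^k), then ⟨x, y⟩ − F(x) = G(y), where ⟨x,y⟩ = Σ_{n,k} x_n^k y_k^n. That is, G is the Legendre transform of F. -/
attribute [local instance] Matrix.normedAddCommGroup Matrix.normedSpace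

open Matrix

noncomputable def entryCLM (N : ℕ) (a b : Fin N) :
    Matrix (Fin N) (Fin N) ℝ →L[ℝ] ℝ :=
  LinearMap.toContinuousLinearMap
    { toFun := fun h => h a b
      map_add' := fun _ _ => rfl
      map_smul' := fun _ _ => rfl }

@[simp] lemma entryCLM_apply {N : ℕ} (a b : Fin N) (z : Matrix (Fin N) (Fin N) ℝ) :
    entryCLM N a b z = z a b := rfl

noncomputable def detDerivCLM {N : ℕ} (x : Matrix (Fin N) (Fin N) ℝ) :
    Matrix (Fin N) (Fin N) ℝ →L[ℝ] ℝ :=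
  LinearMap.toContinuousLinearMap
    { toFun := fun h => ∑ k, (x.updateRow k (h k)).det
      map_add' := by
        intro a b
        simp only [← Finset.sum_add_distrib]
        exact Finset.sum_congr rfl fun k _ => by
          rw [show (a + b) k = a k + b k from rfl]
          simpa using det_updateRow_add x k (a k) (b k)
      map_smul' := by
        intro c a
        simp only [RingHom.id_apply, smul_eq_mul, Finset.mul_sum]
        exact Finset.sum_congr rfl fun k _ => by
          rw [show (c • a) k = c • a k from rfl]
          simpa using det_updateRow_smul x k c (a k) }

@[simp] lemma detDerivCLM_apply {N : ℕ} (x h : Matrix (Fin N) (Fin N) ℝ) :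
    detDerivCLM x h = ∑ k, (x.updateRow k (h k)).det := rfl

theorem hasFDerivAt_det' {N : ℕ} (x : Matrix (Fin N) (Fin N) ℝ) :
    HasFDerivAt Matrix.det (detDerivCLM x) x := by
  have h1 : ∀ σ : Equiv.Perm (Fin N),
      HasFDerivAt (fun z : Matrix (Fin N) (Fin N) ℝ => ∏ i, z (σ i) i)
        (∑ j, (∏ i ∈ Finset.univ.erase j, x (σ i) i) • entryCLM N (σ j) j) x := by
    intro σ
    exact HasFDerivAt.finset_prod (fun i _ => (entryCLM N (σ i) i).hasFDerivAt)
  have h2 : HasFDerivAt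
      (fun z : Matrix (Fin N) (Fin N) ℝ =>
        ∑ σ : Equiv.Perm (Fin N), ((Equiv.Perm.sign σ : ℤ) : ℝ) * ∏ i, z (σ i) i)
      (∑ σ : Equiv.Perm (Fin N), ((Equiv.Perm.sign σ : ℤ) : ℝ) •
        ∑ j, (∏ i ∈ Finset.univ.erase j, x (σ i) i) • entryCLM N (σ j) j) x :=
    HasFDerivAt.fun_sum fun σ _ => (h1 σ).const_mul _
  have hfun : (fun z : Matrix (Fin N) (Fin N) ℝ =>
      ∑ σ : Equiv.Perm (Fin N), ((Equiv.Perm.sign σ : ℤ) : ℝ) * ∏ i, z (σ i) i)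
      = Matrix.det := by
    funext z; exact (Matrix.det_apply' z).symm
  rw [hfun] at h2
  convert h2 using 1
  refine ContinuousLinearMap.ext fun h => ?_
  have key : ∀ σ : Equiv.Perm (Fin N),
      ∑ k, ∏ i, (x.updateRow k (h k)) (σ i) i
        = ∑ j, (∏ i ∈ Finset.univ.erase j, x (σ i) i) * h (σ j) j := by
    intro σ
    rw [← Equiv.sum_comp σ (fun k => ∏ i, (x.updateRow k (h k)) (σ i) i)]
    refine Finset.sum_congr rfl fun j _ => ?_
    rw [← Finset.mul_prod_erase Finset.univ _ (Finset.mem_univ j)]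
    have h1 : (x.updateRow (σ j) (h (σ j))) (σ j) j = h (σ j) j := by
      rw [updateRow_self]
    have h2 : ∀ i ∈ Finset.univ.erase j,
        (x.updateRow (σ j) (h (σ j))) (σ i) i = x (σ i) i := by
      intro i hi
      rw [updateRow_ne]
      exact fun e => (Finset.mem_erase.mp hi).1 (σ.injective e)
    rw [h1, Finset.prod_congr rfl h2, mul_comm]
  calc detDerivCLM x h = ∑ k, (x.updateRow k (h k)).det := rfl
    _ = ∑ k, ∑ σ : Equiv.Perm (Fin N),
          ((Equiv.Perm.sign σ : ℤ) : ℝ) * ∏ i, (x.updateRow k (h k)) (σ i) i := by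
        exact Finset.sum_congr rfl fun k _ => Matrix.det_apply' _
    _ = ∑ σ : Equiv.Perm (Fin N), ((Equiv.Perm.sign σ : ℤ) : ℝ) *
          ∑ k, ∏ i, (x.updateRow k (h k)) (σ i) i := by
        rw [Finset.sum_comm]
        exact Finset.sum_congr rfl fun σ _ => (Finset.mul_sum _ _ _).symm
    _ = _ := by
        simp only [key, ContinuousLinearMap.sum_apply, ContinuousLinearMap.smul_apply,
          entryCLM_apply, smul_eq_mul]

theorem hasFDerivAt_absdet_rpow {N : ℕ} (p : ℝ) (x : Matrix (Fin N) (Fin N) ℝ)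
    (hx : x.det ≠ 0) :
    HasFDerivAt (fun z : Matrix (Fin N) (Fin N) ℝ => ((N : ℝ) / p) * |z.det| ^ (p / (N : ℝ)))
      (((((N : ℝ) / p) * (p / (N : ℝ))) *
        (Real.sign x.det * |x.det| ^ (p / (N : ℝ) - 1))) • detDerivCLM x) x := by
  set α := p / (N : ℝ) with hα
  have hdet : HasFDerivAt Matrix.det (detDerivCLM x) x := hasFDerivAt_det' x
  have hcont : ContinuousAt Matrix.det x := hdet.continuousAt
  rcases hx.lt_or_gt with hd | hd
  · -- det x < 0
    have hev : ∀ᶠ z in nhds x, z.det < 0 := hcont.eventually (eventually_lt_nhds hd)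
    have hr : HasDerivAt (fun t : ℝ => t ^ α) (α * (-x.det) ^ (α - 1)) (-x.det) :=
      Real.hasDerivAt_rpow_const (Or.inl (neg_ne_zero.mpr hx))
    have hneg : HasFDerivAt (fun z : Matrix (Fin N) (Fin N) ℝ => -z.det)
        (-detDerivCLM x) x := hdet.neg
    have hg : HasFDerivAt
        (fun z : Matrix (Fin N) (Fin N) ℝ => ((N : ℝ) / p) * (-z.det) ^ α)
        (((N : ℝ) / p) • ((α * (-x.det) ^ (α - 1)) • (-detDerivCLM x))) x :=
      (hr.comp_hasFDerivAt x hneg).const_mul _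
    have heq : (fun z : Matrix (Fin N) (Fin N) ℝ => ((N : ℝ) / p) * |z.det| ^ α)
        =ᶠ[nhds x] (fun z : Matrix (Fin N) (Fin N) ℝ => ((N : ℝ) / p) * (-z.det) ^ α) := by
      filter_upwards [hev] with z hz
      rw [abs_of_neg hz]
    refine (hg.congr_of_eventuallyEq heq).congr_fderiv ?_
    rw [smul_neg, ← neg_smul, smul_smul]
    congr 1
    rw [Real.sign_of_neg hd, abs_of_neg hd]
    ring
  · -- det x > 0
    have hev : ∀ᶠ z in nhds x, 0 < z.det := hcont.eventually (eventually_gt_nhds hd)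
    have hr : HasDerivAt (fun t : ℝ => t ^ α) (α * x.det ^ (α - 1)) x.det :=
      Real.hasDerivAt_rpow_const (Or.inl hx)
    have hg : HasFDerivAt
        (fun z : Matrix (Fin N) (Fin N) ℝ => ((N : ℝ) / p) * z.det ^ α)
        (((N : ℝ) / p) • ((α * x.det ^ (α - 1)) • detDerivCLM x)) x :=
      (hr.comp_hasFDerivAt x hdet).const_mul _
    have heq : (fun z : Matrix (Fin N) (Fin N) ℝ => ((N : ℝ) / p) * |z.det| ^ α)
        =ᶠ[nhds x] (fun z : Matrix (Fin N) (Fin N) ℝ => ((N : ℝ) / p) * z.det ^ α) := by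
      filter_upwards [hev] with z hz
      rw [abs_of_pos hz]
    refine (hg.congr_of_eventuallyEq heq).congr_fderiv ?_
    rw [smul_smul]
    congr 1
    rw [Real.sign_of_pos hd, abs_of_pos hd]
    ring

/-- Legendre duality for `F(x) = (N/p)|det x|^{p/N}`: if `1/p + 1/q = 1`, `p ≠ 0`,
`p ≠ 1`, `det x ≠ 0` and `y` is the derivative matrix of `F` at `x`
(`y k n = ∂F/∂x n k`), then `⟨x,y⟩ - F(x) = (N/q)|det y|^{q/N}`. -/
theorem legendre_power_det (N : ℕ) (hN : 0 < N) (p q : ℝ) (hp0 : p ≠ 0) (hp1 : p ≠ 1)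
    (hpq : 1 / p + 1 / q = 1) (x y : Matrix (Fin N) (Fin N) ℝ) (hx : x.det ≠ 0)
    (hy : ∀ k n, y k n =
      fderiv ℝ (fun z : Matrix (Fin N) (Fin N) ℝ => ((N : ℝ) / p) * |z.det| ^ (p / (N : ℝ)))
        x (Matrix.single n k 1)) :
    (∑ n, ∑ k, x n k * y k n) - ((N : ℝ) / p) * |x.det| ^ (p / (N : ℝ))
      = ((N : ℝ) / q) * |y.det| ^ (q / (N : ℝ)) := by
  have hNR : (N : ℝ) ≠ 0 := Nat.cast_ne_zero.mpr hN.ne'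
  have hq0 : q ≠ 0 := by
    intro h
    rw [h, div_zero, add_zero, one_div, inv_eq_one] at hpq
    exact hp1 hpq
  set α := p / (N : ℝ) with hα
  set c := ((N : ℝ) / p * (p / (N : ℝ))) * (Real.sign x.det * |x.det| ^ (α - 1)) with hc
  have hcoef : ((N : ℝ) / p * (p / (N : ℝ))) = 1 := by field_simp
  have hc' : c = Real.sign x.det * |x.det| ^ (α - 1) := by rw [hc, hcoef, one_mul]
  have hfd := (hasFDerivAt_absdet_rpow p x hx).fderiv
  -- `y` is `c • adjugate x`
  have hyc : ∀ k n, y k n = c * x.adjugate k n := by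
    intro k n
    rw [hy k n, hfd, ContinuousLinearMap.smul_apply, detDerivCLM_apply, smul_eq_mul]
    congr 1
    rw [Finset.sum_eq_single n]
    · have hrow : Matrix.single n k (1:ℝ) n = Pi.single k (1:ℝ) := by
        funext b
        rcases eq_or_ne b k with hbk | hbk
        · subst hbk; simp [Matrix.single]
        · simp [Matrix.single, Pi.single_apply, hbk, Ne.symm hbk]
      simp only [hrow]
      rw [Matrix.adjugate_apply]
    · intro m _ hmn
      refine Matrix.det_eq_zero_of_row_eq_zero m fun j => ?_
      rw [Matrix.updateRow_self]
      simp [Matrix.single, (Ne.symm hmn)]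
    · intro h; exact absurd (Finset.mem_univ n) h
  have hym : y = c • x.adjugate := by
    ext k n
    rw [hyc k n, Matrix.smul_apply, smul_eq_mul]
  -- inner product
  have hsum : ∑ n, ∑ k, x n k * y k n = c * (x.det * N) := by
    have h1 : ∀ n : Fin N, ∑ k, x n k * y k n = c * (x * x.adjugate) n n := by
      intro n
      rw [Matrix.mul_apply, Finset.mul_sum]
      exact Finset.sum_congr rfl fun k _ => by rw [hyc k n]; ring
    rw [Finset.sum_congr rfl fun n _ => h1 n, ← Finset.mul_sum]
    congr 1
    rw [Matrix.mul_adjugate]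
    simp [Matrix.smul_apply, Matrix.one_apply_eq, Finset.sum_const, mul_comm]
  -- sign facts
  have habspos : (0:ℝ) < |x.det| := abs_pos.mpr hx
  obtain ⟨hcd, habs⟩ : c * x.det = |x.det| ^ α ∧ |c| = |x.det| ^ (α - 1) := by
    have hA : (0:ℝ) < |x.det| ^ (α - 1) := Real.rpow_pos_of_pos habspos _
    rcases hx.lt_or_gt with hd | hd
    · rw [hc', Real.sign_of_neg hd, abs_of_neg hd]
      have hA' : (0:ℝ) < (-x.det) ^ (α - 1) := Real.rpow_pos_of_pos (by linarith) _
      refine ⟨?_, ?_⟩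
      · have h2 : -1 * (-x.det) ^ (α - 1) * x.det = (-x.det) ^ (α - 1) * (-x.det) := by ring
        rw [h2, ← Real.rpow_add_one (ne_of_gt (by linarith)), sub_add_cancel]
      · rw [abs_mul, abs_of_pos hA']
        norm_num
    · rw [hc', Real.sign_of_pos hd, abs_of_pos hd]
      have hA' : (0:ℝ) < x.det ^ (α - 1) := Real.rpow_pos_of_pos hd _
      refine ⟨?_, ?_⟩
      · rw [one_mul, ← Real.rpow_add_one hx, sub_add_cancel]
      · rw [one_mul, abs_of_pos hA']
  -- determinant of y
  have hdy : |y.det| = |x.det| ^ (p - 1) := by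
    have h1 : y.det = c ^ N * x.det ^ (N - 1) := by
      rw [hym, Matrix.det_smul, Matrix.det_adjugate, Fintype.card_fin]
    have hcast : ((N - 1 : ℕ) : ℝ) = (N : ℝ) - 1 := by
      rw [Nat.cast_sub hN, Nat.cast_one]
    rw [h1, abs_mul, abs_pow, abs_pow, habs,
      ← Real.rpow_natCast (|x.det| ^ (α - 1)) N, ← Real.rpow_mul (abs_nonneg _),
      ← Real.rpow_natCast |x.det| (N - 1), hcast,
      ← Real.rpow_add habspos]
    congr 1
    rw [hα]
    field_simp
    ring
  -- exponent identity
  have hpq2 : (p - 1) * q = p := by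
    field_simp at hpq
    linear_combination -hpq
  have e1 : (p - 1) * (q / (N : ℝ)) = α := by
    rw [hα, mul_div_assoc', hpq2]
  have h1q : 1 / q = 1 - 1 / p := by linarith
  have hNq : (N : ℝ) - N / p = N / q := by
    rw [div_eq_mul_one_div (N : ℝ) q, h1q]; ring
  rw [hsum, hdy, ← Real.rpow_mul (abs_nonneg _), e1]
  have h3 : c * (x.det * N) = |x.det| ^ α * N := by rw [← hcd]; ring
  rw [h3]
  linear_combination |x.det| ^ α * hNq
end

section
/- The function G(x) = ln|det x| + N/2 on invertible N×N real matrices is self-dual under the Legendre transform: if y = G'(x) then ⟨x,y⟩ − G(x) = G(y). -/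
attribute [local instance] Matrix.normedAddCommGroup Matrix.normedSpace

open Matrix

/-- The determinant as a continuous multilinear map in the rows. -/
noncomputable def detCML (N : ℕ) :
    ContinuousMultilinearMap ℝ (fun _ : Fin N => (Fin N → ℝ)) ℝ :=
  { (Matrix.detRowAlternating : (Fin N → ℝ) [⋀^Fin N]→ₗ[ℝ] ℝ).toMultilinearMap with
    cont := by
      have h : Continuous fun M : Matrix (Fin N) (Fin N) ℝ => M.det :=
        continuous_id.matrix_det
      exact h }

theorem hasFDerivAt_det'_s8 (N : ℕ) (x : Matrix (Fin N) (Fin N) ℝ) :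
    HasFDerivAt (fun z : Matrix (Fin N) (Fin N) ℝ => z.det)
      ((detCML N).linearDeriv x) x :=
  (detCML N).hasFDerivAt x

theorem linearDeriv_det_std (N : ℕ) (x : Matrix (Fin N) (Fin N) ℝ) (n k : Fin N) :
    (detCML N).linearDeriv x (Matrix.single n k 1) = x.adjugate k n := by
  erw [ContinuousMultilinearMap.linearDeriv_apply]
  have hterm : ∀ i : Fin N,
      detCML N (Function.update x i (Matrix.single n k 1 i))
        = if i = n then x.adjugate k n else 0 := by
    intro i
    by_cases hin : i = n
    · subst hin
      have hrow : Matrix.single i k (1 : ℝ) i = Pi.single k 1 := by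
        funext j
        simp [Matrix.single, Pi.single_apply, eq_comm]
      rw [if_pos rfl, hrow, Matrix.adjugate_apply]
      rfl
    · have hrow : Matrix.single n k (1 : ℝ) i = 0 := by
        funext j
        simp [Matrix.single, Ne.symm hin]
      rw [if_neg hin, hrow]
      show (x.updateRow i 0).det = 0
      exact Matrix.det_eq_zero_of_row_eq_zero i (fun j => by
        rw [Matrix.updateRow_self]; rfl)
  simp only [hterm]
  simp

theorem y_eq_inv (N : ℕ) (x y : Matrix (Fin N) (Fin N) ℝ) (hx : x.det ≠ 0)
    (hy : ∀ k n, y k n =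
      fderiv ℝ (fun z : Matrix (Fin N) (Fin N) ℝ => Real.log |z.det| + (N : ℝ) / 2)
        x (Matrix.single n k 1)) : y = x⁻¹ := by
  have hfun : (fun z : Matrix (Fin N) (Fin N) ℝ => Real.log |z.det| + (N : ℝ) / 2)
      = fun z => Real.log z.det + (N : ℝ) / 2 := by
    funext z; rw [Real.log_abs]
  have hlog : HasFDerivAt (fun z : Matrix (Fin N) (Fin N) ℝ => Real.log z.det)
      ((x.det)⁻¹ • (detCML N).linearDeriv x) x :=
    (Real.hasDerivAt_log hx).comp_hasFDerivAt x (hasFDerivAt_det'_s8 N x)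
  have hG : HasFDerivAt
      (fun z : Matrix (Fin N) (Fin N) ℝ => Real.log |z.det| + (N : ℝ) / 2)
      ((x.det)⁻¹ • (detCML N).linearDeriv x) x := by
    rw [hfun]
    exact hlog.add_const _
  have hfd := @HasFDerivAt.fderiv _ _ _ _ _ _ _ _ _ _ _ _ _ (inferInstance : ContinuousAdd (Matrix (Fin N) (Fin N) ℝ)) (inferInstance : ContinuousSMul ℝ (Matrix (Fin N) (Fin N) ℝ)) _ _ _ hG
  funext k n
  erw [hy k n, hfd]
  show (x.det)⁻¹ • (detCML N).linearDeriv x (Matrix.single n k 1) = _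
  erw [linearDeriv_det_std N x n k]
  rw [Matrix.inv_def]
  simp [Ring.inverse_eq_inv', smul_eq_mul]

/-- The function `G(x) = ln|det x| + N/2` on invertible matrices is self-dual for
the Legendre transform: if `y = G'(x)` then `⟨x,y⟩ - G(x) = G(y)`. -/
theorem log_det_self_dual (N : ℕ) (x y : Matrix (Fin N) (Fin N) ℝ) (hx : x.det ≠ 0)
    (hy : ∀ k n, y k n =
      fderiv ℝ (fun z : Matrix (Fin N) (Fin N) ℝ => Real.log |z.det| + (N : ℝ) / 2)
        x (Matrix.single n k 1)) :
    (∑ n, ∑ k, x n k * y k n) - (Real.log |x.det| + (N : ℝ) / 2)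
      = Real.log |y.det| + (N : ℝ) / 2 := by
  have hinv : y = x⁻¹ := y_eq_inv N x y hx hy
  subst hinv
  have hu : IsUnit x.det := isUnit_iff_ne_zero.mpr hx
  have hsum : (∑ n, ∑ k, x n k * x⁻¹ k n) = (N : ℝ) := by
    have h1 : (∑ n, ∑ k, x n k * x⁻¹ k n) = (x * x⁻¹).trace := by
      simp [Matrix.trace, Matrix.mul_apply, Matrix.diag]
    rw [h1, Matrix.mul_nonsing_inv x hu]
    simp [Matrix.trace_one]
  have hdet : x⁻¹.det = (x.det)⁻¹ := by
    rw [Matrix.det_nonsing_inv, Ring.inverse_eq_inv']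
  rw [hsum, hdet, abs_inv, Real.log_inv]
  ring
end

section
/- Let x be a 3×3 real matrix with cofactors Δ_n^k (the cofactor of x_n^k), let Φ: ℝ⁹ → ℝ be C¹, and define F(x) = Φ(Δ). Let Φ_k^n = ∂Φ/∂Δ_n^k evaluated at Δ(x), and let y be the matrix y_k^n = ∂F/∂x_n^k. If the 3×3 matrix (Φ_k^n) has rank 1 (all its 2×2 minors vanish, i.e., Φ_k^n Φ_j^i = Φ_j^n Φ_k^i for all indices), then each cofactor D_k^n of y satisfies D_k^n = Φ_k^n · Σ_{i,j} Φ_j^i Δ_i^j. -/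
attribute [local instance] Matrix.normedAddCommGroup Matrix.normedSpace

noncomputable def ent (i j : Fin 3) : Matrix (Fin 3) (Fin 3) ℝ →L[ℝ] ℝ :=
  LinearMap.toContinuousLinearMap
    { toFun := fun z => z i j
      map_add' := fun _ _ => rfl
      map_smul' := fun _ _ => rfl }

@[simp] lemma ent_apply (i j : Fin 3) (z : Matrix (Fin 3) (Fin 3) ℝ) : ent i j z = z i j := rfl

/-- cofactor: `cof z n k = adjugate z k n` -/
def cof (z : Matrix (Fin 3) (Fin 3) ℝ) (n k : Fin 3) : ℝ :=
  z (n+1) (k+1) * z (n+2) (k+2) - z (n+1) (k+2) * z (n+2) (k+1)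

lemma adjugate_eq_cof (z : Matrix (Fin 3) (Fin 3) ℝ) (n k : Fin 3) :
    z.adjugate k n = cof z n k := by
  rw [Matrix.adjugate_fin_three]
  fin_cases n <;> fin_cases k <;> simp [cof] <;> ring

noncomputable def dcof (x : Matrix (Fin 3) (Fin 3) ℝ) (n k : Fin 3) :
    Matrix (Fin 3) (Fin 3) ℝ →L[ℝ] ℝ :=
  (x (n+1) (k+1) • ent (n+2) (k+2) + x (n+2) (k+2) • ent (n+1) (k+1))
  - (x (n+1) (k+2) • ent (n+2) (k+1) + x (n+2) (k+1) • ent (n+1) (k+2))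

lemma hasFDerivAt_cof (x : Matrix (Fin 3) (Fin 3) ℝ) (n k : Fin 3) :
    HasFDerivAt (fun z => cof z n k) (dcof x n k) x :=
  (((ent (n+1) (k+1)).hasFDerivAt.mul (ent (n+2) (k+2)).hasFDerivAt).sub
    ((ent (n+1) (k+2)).hasFDerivAt.mul (ent (n+2) (k+1)).hasFDerivAt))

noncomputable def Amap (z : Matrix (Fin 3) (Fin 3) ℝ) : Matrix (Fin 3) (Fin 3) ℝ :=
  Matrix.of fun a b => z.adjugate b a

noncomputable def A' (x : Matrix (Fin 3) (Fin 3) ℝ) :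
    Matrix (Fin 3) (Fin 3) ℝ →L[ℝ] Matrix (Fin 3) (Fin 3) ℝ :=
  ContinuousLinearMap.pi fun a => ContinuousLinearMap.pi fun b => dcof x a b

lemma hasFDerivAt_Amap (x : Matrix (Fin 3) (Fin 3) ℝ) : HasFDerivAt Amap (A' x) x := by
  refine hasFDerivAt_pi'.2 ?_
  intro a
  rw [hasFDerivAt_pi']
  intro b
  have : (fun z => Amap z a b) = fun z => cof z a b := by
    funext z; simp [Amap, adjugate_eq_cof]
  rw [this]
  exact hasFDerivAt_cof x a b

lemma rank1_factor (G : Matrix (Fin 3) (Fin 3) ℝ)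
    (hrank : ∀ n k i j, G k n * G j i = G j n * G k i) :
    ∃ u v : Fin 3 → ℝ, ∀ k n, G k n = u k * v n := by
  by_cases h : ∀ k n, G k n = 0
  · exact ⟨0, 0, fun k n => by simp [h]⟩
  · push_neg at h
    obtain ⟨k0, n0, h0⟩ := h
    refine ⟨fun k => G k n0, fun n => G k0 n / G k0 n0, fun k n => ?_⟩
    rw [mul_div_assoc', eq_div_iff h0]
    have := hrank n k n0 k0
    linarith

lemma fin3_mk_two (h : 2 < 3) : (⟨2, h⟩ : Fin 3) = 2 := rfl

set_option maxHeartbeats 4000000 in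
/-- Rank-one cofactor lemma -/
theorem rank_one_cofactor_lemma
    (Φ : Matrix (Fin 3) (Fin 3) ℝ → ℝ) (hΦ : ContDiff ℝ 1 Φ)
    (x Δ : Matrix (Fin 3) (Fin 3) ℝ) (hΔ : ∀ n k, Δ n k = x.adjugate k n)
    (G : Matrix (Fin 3) (Fin 3) ℝ)
    (hG : ∀ k n, G k n = fderiv ℝ Φ Δ (Matrix.single n k 1))
    (y : Matrix (Fin 3) (Fin 3) ℝ)
    (hy : ∀ k n, y k n =
      fderiv ℝ (fun z : Matrix (Fin 3) (Fin 3) ℝ => Φ (Matrix.of fun a b => z.adjugate b a))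
        x (Matrix.single n k 1))
    (hrank : ∀ n k i j, G k n * G j i = G j n * G k i) :
    ∀ k n, y.adjugate n k = G k n * ∑ i, ∑ j, G j i * Δ i j := by
  have hAx : Amap x = Δ := by
    ext a b; simp [Amap, hΔ]
  have hΦd : HasFDerivAt Φ (fderiv ℝ Φ Δ) (Amap x) := by
    rw [hAx]
    exact (hΦ.differentiable one_ne_zero).differentiableAt.hasFDerivAt
  have hF : HasFDerivAt (fun z : Matrix (Fin 3) (Fin 3) ℝ => Φ (Amap z))
      ((fderiv ℝ Φ Δ).comp (A' x)) x := hΦd.comp x (hasFDerivAt_Amap x)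
  have hL : ∀ M : Matrix (Fin 3) (Fin 3) ℝ,
      fderiv ℝ Φ Δ M = ∑ a, ∑ b, M a b * G b a := by
    intro M
    conv_lhs => rw [Matrix.matrix_eq_sum_single M]
    rw [map_sum]
    refine Finset.sum_congr rfl fun a _ => ?_
    rw [map_sum]
    refine Finset.sum_congr rfl fun b _ => ?_
    rw [show Matrix.single a b (M a b) = M a b • Matrix.single a b 1 by
      rw [Matrix.smul_single, smul_eq_mul, mul_one], map_smul, hG]
    rfl
  have yv : ∀ k n, y k n = ∑ a, ∑ b, dcof x a b (Matrix.single n k 1) * G b a := by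
    intro k n
    rw [hy k n]
    have := hF.fderiv
    simp only [Amap] at this
    rw [this, ContinuousLinearMap.comp_apply, hL]
    rfl
  -- uniform closed form for y
  have Y : ∀ k n, y k n =
      G (k+1) (n+1) * x (n+2) (k+2) + G (k+2) (n+2) * x (n+1) (k+1)
      - G (k+2) (n+1) * x (n+2) (k+1) - G (k+1) (n+2) * x (n+1) (k+2) := by
    intro k n
    rw [yv k n]
    fin_cases k <;> fin_cases n <;>
      (simp [Fin.sum_univ_three, dcof, Matrix.single, Matrix.of_apply] <;> ring)
  obtain ⟨u, v, huv⟩ := rank1_factor G hrank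
  intro k n
  rw [adjugate_eq_cof]
  fin_cases k <;> fin_cases n <;>
    (simp only [cof, Y, huv, hΔ, adjugate_eq_cof, Fin.sum_univ_three, Fin.mk_zero,
       Fin.mk_one, fin3_mk_two, Fin.reduceAdd, Fin.isValue] <;> ring)
end

section
/- With the setup of the rank-1 cofactor lemma, if in addition Φ is positively homogeneous of degree α, then the cofactors of y = F'(x) satisfy D_k^n = α · Φ(Δ) · Φ_k^n, i.e., the cofactor matrix of y equals α Φ(Δ) times the gradient matrix of Φ at Δ. -/
attribute [local instance] Matrix.normedAddCommGroup Matrix.normedSpace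

private abbrev M3 := Matrix (Fin 3) (Fin 3) ℝ

private lemma hEnt (i j : Fin 3) : Differentiable ℝ (fun z : M3 => z i j) :=
  (LinearMap.toContinuousLinearMap (Matrix.entryLinearMap ℝ ℝ i j)).differentiable

private lemma diff_congr {f g : M3 → ℝ} (h : Differentiable ℝ f) (he : ∀ z, g z = f z) :
    Differentiable ℝ g := by
  have : g = f := funext he
  rw [this]; exact h

private lemma hcofdiff : Differentiable ℝ (fun z : M3 => Matrix.of fun a b => z.adjugate b a) := by
  refine differentiable_pi.2 fun a => differentiable_pi.2 fun b => ?_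
  have h2 : ∀ (i j k l m n p q : Fin 3),
      Differentiable ℝ (fun z : M3 => z i j * z k l - z m n * z p q) :=
    fun i j k l m n p q => ((hEnt i j).mul (hEnt k l)).sub ((hEnt m n).mul (hEnt p q))
  have h3 : ∀ (i j k l m n p q : Fin 3),
      Differentiable ℝ (fun z : M3 => -(z i j * z k l) + z m n * z p q) :=
    fun i j k l m n p q => (((hEnt i j).mul (hEnt k l)).neg).add ((hEnt m n).mul (hEnt p q))
  fin_cases a <;> fin_cases b
  · exact diff_congr (h2 1 1 2 2 1 2 2 1) fun z => by rw [Matrix.adjugate_fin_three]; norm_num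
  · exact diff_congr (h3 1 0 2 2 1 2 2 0) fun z => by rw [Matrix.adjugate_fin_three]; norm_num
  · exact diff_congr (h2 1 0 2 1 1 1 2 0) fun z => by rw [Matrix.adjugate_fin_three]; norm_num
  · exact diff_congr (h3 0 1 2 2 0 2 2 1) fun z => by rw [Matrix.adjugate_fin_three]; norm_num
  · exact diff_congr (h2 0 0 2 2 0 2 2 0) fun z => by rw [Matrix.adjugate_fin_three]; norm_num
  · exact diff_congr (h3 0 0 2 1 0 1 2 0) fun z => by rw [Matrix.adjugate_fin_three]; norm_num
  · exact diff_congr (h2 0 1 1 2 0 2 1 1) fun z => by rw [Matrix.adjugate_fin_three]; norm_num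
  · exact diff_congr (h3 0 0 1 2 0 2 1 0) fun z => by rw [Matrix.adjugate_fin_three]; norm_num
  · exact diff_congr (h2 0 0 1 1 0 1 1 0) fun z => by rw [Matrix.adjugate_fin_three]; norm_num

private lemma hpath (x E : M3) (t : ℝ) :
    (Matrix.of fun a b => (x + t • E).adjugate b a) =
      (Matrix.of fun a b => x.adjugate b a)
      + t • ((Matrix.of fun a b => (x + E).adjugate b a) - (Matrix.of fun a b => x.adjugate b a)
             - (Matrix.of fun a b => E.adjugate b a))
      + (t*t) • (Matrix.of fun a b => E.adjugate b a) := by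
  ext a b
  simp only [Matrix.add_apply, Matrix.smul_apply, Matrix.sub_apply, Matrix.of_apply,
    smul_eq_mul, Pi.add_apply, Pi.sub_apply, Pi.smul_apply]
  fin_cases a <;> fin_cases b <;>
    · simp only [Matrix.adjugate_fin_three]
      norm_num [Matrix.add_apply, Matrix.smul_apply]
      ring

set_option maxRecDepth 40000 in
set_option maxHeartbeats 2000000 in
/-- Rank-one cofactor lemma with homogeneity: with the setup of the rank-1 lemma,
if `Φ` is positively homogeneous of degree `α`, then the cofactors of `y = F'(x)`
satisfy `D k n = α · Φ(Δ) · G k n`. -/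
theorem rank_one_cofactor_homogeneous (α : ℝ)
    (Φ : Matrix (Fin 3) (Fin 3) ℝ → ℝ) (hΦ : ContDiff ℝ 1 Φ)
    (hhom : ∀ t : ℝ, 0 < t → ∀ M : Matrix (Fin 3) (Fin 3) ℝ, Φ (t • M) = t ^ α * Φ M)
    (x Δ : Matrix (Fin 3) (Fin 3) ℝ) (hΔ : ∀ n k, Δ n k = x.adjugate k n)
    (G : Matrix (Fin 3) (Fin 3) ℝ)
    (hG : ∀ k n, G k n = fderiv ℝ Φ Δ (Matrix.single n k 1))
    (y : Matrix (Fin 3) (Fin 3) ℝ)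
    (hy : ∀ k n, y k n =
      fderiv ℝ (fun z : Matrix (Fin 3) (Fin 3) ℝ => Φ (Matrix.of fun a b => z.adjugate b a))
        x (Matrix.single n k 1))
    (hrank : ∀ n k i j, G k n * G j i = G j n * G k i) :
    ∀ k n, y.adjugate n k = α * Φ Δ * G k n := by
  have hΦd : Differentiable ℝ Φ := hΦ.differentiable one_ne_zero
  have hΔc : (Matrix.of fun a b => x.adjugate b a) = Δ := by
    ext a b; exact (hΔ a b).symm
  -- linear expansion of the differential of Φ at Δ
  have hL : ∀ M : M3, fderiv ℝ Φ Δ M = ∑ p : Fin 3, ∑ q : Fin 3, M p q * G q p := by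
    intro M
    conv_lhs => rw [Matrix.matrix_eq_sum_single M]
    rw [map_sum]
    refine Finset.sum_congr rfl fun p _ => ?_
    rw [map_sum]
    refine Finset.sum_congr rfl fun q _ => ?_
    rw [show Matrix.single p q (M p q) = (M p q) • Matrix.single p q 1 by
      rw [Matrix.smul_single, smul_eq_mul, mul_one]]
    rw [map_smul, hG q p, smul_eq_mul]
  -- explicit formula for the entries of y
  have key : ∀ k n : Fin 3, y k n =
      ∑ p : Fin 3, ∑ q : Fin 3,
        ((Matrix.of fun a b => (x + Matrix.single n k 1).adjugate b a) p q
          - (Matrix.of fun a b => x.adjugate b a) p q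
          - (Matrix.of fun a b => (Matrix.single n k 1).adjugate b a) p q) * G q p := by
    intro k n
    set E : M3 := Matrix.single n k 1 with hE
    set Λ : M3 := (Matrix.of fun a b => (x + E).adjugate b a)
      - (Matrix.of fun a b => x.adjugate b a)
      - (Matrix.of fun a b => E.adjugate b a) with hΛ
    have h1 : HasDerivAt (fun t : ℝ => Matrix.of fun a b => (x + t • E).adjugate b a) Λ 0 := by
      have ha : HasDerivAt (fun t : ℝ => (Matrix.of fun a b => x.adjugate b a) + t • Λ) Λ 0 := by
        exact ((hasDerivAt_const (0:ℝ) (Matrix.of fun a b => x.adjugate b a)).add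
          ((hasDerivAt_id (0:ℝ)).smul_const Λ)).congr_deriv (by simp)
      have hb : HasDerivAt
          (fun t : ℝ => (t*t) • (Matrix.of fun a b => E.adjugate b a)) (0 : M3) 0 := by
        exact (((hasDerivAt_id (0:ℝ)).mul (hasDerivAt_id (0:ℝ))).smul_const
          (Matrix.of fun a b => E.adjugate b a)).congr_deriv (by simp)
      have h0 := ha.add hb
      simp only [add_zero] at h0
      have heq : (fun t : ℝ => Matrix.of fun a b => (x + t • E).adjugate b a)
          = fun t : ℝ => ((Matrix.of fun a b => x.adjugate b a) + t • Λ)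
              + (t*t) • (Matrix.of fun a b => E.adjugate b a) := funext fun t => hpath x E t
      rw [heq]
      exact h0
    have h2 : HasDerivAt (fun t : ℝ => Φ (Matrix.of fun a b => (x + t • E).adjugate b a))
        (fderiv ℝ Φ Δ Λ) 0 := by
      have hΦ0 : HasFDerivAt Φ (fderiv ℝ Φ Δ)
          ((fun t : ℝ => Matrix.of fun a b => (x + t • E).adjugate b a) 0) := by
        have : (Matrix.of fun a b => (x + (0:ℝ) • E).adjugate b a) = Δ := by
          rw [zero_smul, add_zero, hΔc]
        rw [show ((fun t : ℝ => Matrix.of fun a b => (x + t • E).adjugate b a) 0)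
          = Δ from this]
        exact (hΦd Δ).hasFDerivAt
      exact hΦ0.comp_hasDerivAt (0:ℝ) h1
    have h3 : HasDerivAt (fun t : ℝ => Φ (Matrix.of fun a b => (x + t • E).adjugate b a))
        (y k n) 0 := by
      have hF : DifferentiableAt ℝ
          (fun z : M3 => Φ (Matrix.of fun a b => z.adjugate b a)) x :=
        (hΦd.comp hcofdiff).differentiableAt
      have hp0 : HasDerivAt (fun t : ℝ => x + t • E) E 0 := by
        exact ((hasDerivAt_const (0:ℝ) x).add ((hasDerivAt_id (0:ℝ)).smul_const E)).congr_deriv (by simp)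
      have hFd : HasFDerivAt (fun z : M3 => Φ (Matrix.of fun a b => z.adjugate b a))
          (fderiv ℝ (fun z : M3 => Φ (Matrix.of fun a b => z.adjugate b a)) x)
          ((fun t : ℝ => x + t • E) 0) := by
        rw [show ((fun t : ℝ => x + t • E) 0) = x by simp]
        exact hF.hasFDerivAt
      have hc := hFd.comp_hasDerivAt (0:ℝ) hp0
      rw [hy k n, ← hE]
      exact hc
    rw [h3.unique h2, hL Λ, hΛ]
    simp [Matrix.sub_apply]
  -- Euler relation
  have hEuler : ∑ p : Fin 3, ∑ q : Fin 3, Δ p q * G q p = α * Φ Δ := by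
    have hsd : HasDerivAt (fun t : ℝ => t • Δ) Δ 1 := by
      exact ((hasDerivAt_id (1:ℝ)).smul_const Δ).congr_deriv (by simp)
    have h5 : HasDerivAt (fun t : ℝ => Φ (t • Δ)) (fderiv ℝ Φ Δ Δ) 1 := by
      have hΦd1 : HasFDerivAt Φ (fderiv ℝ Φ Δ) ((fun t : ℝ => t • Δ) 1) := by
        rw [show ((fun t : ℝ => t • Δ) 1) = Δ from one_smul _ _]
        exact (hΦd Δ).hasFDerivAt
      exact hΦd1.comp_hasDerivAt (1:ℝ) hsd
    have h6 : HasDerivAt (fun t : ℝ => Φ (t • Δ)) (α * Φ Δ) 1 := by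
      have h7 : HasDerivAt (fun t : ℝ => t ^ α * Φ Δ) (α * Φ Δ) 1 := by
        have := (Real.hasDerivAt_rpow_const (x := (1:ℝ)) (p := α)
          (Or.inl one_ne_zero)).mul_const (Φ Δ)
        simpa [Real.one_rpow] using this
      refine h7.congr_of_eventuallyEq ?_
      filter_upwards [eventually_gt_nhds (by norm_num : (0:ℝ) < 1)] with t ht
      exact hhom t ht Δ
    rw [← hL Δ, h5.unique h6]
  have main : ∀ k n : Fin 3,
      y.adjugate n k = (∑ p : Fin 3, ∑ q : Fin 3, Δ p q * G q p) * G k n := by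
    intro k n
    fin_cases k <;> fin_cases n
    · show y.adjugate 0 0 = (∑ p : Fin 3, ∑ q : Fin 3, Δ p q * G q p) * G 0 0
      simp only [key, hΔ, Matrix.of_apply, Fin.sum_univ_three, Matrix.adjugate_fin_three,
        Matrix.add_apply, Matrix.cons_val', Matrix.cons_val_zero, Matrix.cons_val_one,
        Matrix.head_cons, Matrix.empty_val', Matrix.cons_val_fin_one, Matrix.head_fin_const,
        Fin.isValue]
      norm_num [Matrix.single, Fin.ext_iff, Matrix.vecHead, Matrix.vecTail, Matrix.cons_val_two,
        Function.comp]
      linear_combination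
          (-1 : ℝ) * x 0 0 * x 0 0 * hrank 2 1 1 2 +
          (1 : ℝ) * x 0 0 * x 0 1 * hrank 2 0 1 2 -
          (1 : ℝ) * x 0 0 * x 0 2 * hrank 2 0 1 1 +
          (1 : ℝ) * x 0 0 * x 1 0 * hrank 2 1 0 2 -
          (1 : ℝ) * x 0 0 * x 2 0 * hrank 1 1 0 2 -
          (1 : ℝ) * x 0 1 * x 1 0 * hrank 2 0 0 2 +
          (1 : ℝ) * x 0 1 * x 2 0 * hrank 1 0 0 2 +
          (1 : ℝ) * x 0 2 * x 1 0 * hrank 2 0 0 1 -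
          (1 : ℝ) * x 0 2 * x 2 0 * hrank 1 0 0 1
    · show y.adjugate 1 0 = (∑ p : Fin 3, ∑ q : Fin 3, Δ p q * G q p) * G 0 1
      simp only [key, hΔ, Matrix.of_apply, Fin.sum_univ_three, Matrix.adjugate_fin_three,
        Matrix.add_apply, Matrix.cons_val', Matrix.cons_val_zero, Matrix.cons_val_one,
        Matrix.head_cons, Matrix.empty_val', Matrix.cons_val_fin_one, Matrix.head_fin_const,
        Fin.isValue]
      norm_num [Matrix.single, Fin.ext_iff, Matrix.vecHead, Matrix.vecTail, Matrix.cons_val_two,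
        Function.comp]
      linear_combination
          (-1 : ℝ) * x 0 0 * x 1 0 * hrank 2 1 1 2 +
          (1 : ℝ) * x 0 0 * x 1 1 * hrank 2 0 1 2 -
          (1 : ℝ) * x 0 0 * x 1 2 * hrank 2 0 1 1 +
          (1 : ℝ) * x 1 0 * x 1 0 * hrank 2 1 0 2 -
          (1 : ℝ) * x 1 0 * x 1 1 * hrank 2 0 0 2 +
          (1 : ℝ) * x 1 0 * x 1 2 * hrank 2 0 0 1 -
          (1 : ℝ) * x 1 0 * x 2 0 * hrank 1 1 0 2 +
          (1 : ℝ) * x 1 1 * x 2 0 * hrank 1 0 0 2 -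
          (1 : ℝ) * x 1 2 * x 2 0 * hrank 1 0 0 1
    · show y.adjugate 2 0 = (∑ p : Fin 3, ∑ q : Fin 3, Δ p q * G q p) * G 0 2
      simp only [key, hΔ, Matrix.of_apply, Fin.sum_univ_three, Matrix.adjugate_fin_three,
        Matrix.add_apply, Matrix.cons_val', Matrix.cons_val_zero, Matrix.cons_val_one,
        Matrix.head_cons, Matrix.empty_val', Matrix.cons_val_fin_one, Matrix.head_fin_const,
        Fin.isValue]
      norm_num [Matrix.single, Fin.ext_iff, Matrix.vecHead, Matrix.vecTail, Matrix.cons_val_two,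
        Function.comp]
      linear_combination
          (-1 : ℝ) * x 0 0 * x 2 0 * hrank 2 1 1 2 +
          (1 : ℝ) * x 0 0 * x 2 1 * hrank 2 0 1 2 -
          (1 : ℝ) * x 0 0 * x 2 2 * hrank 2 0 1 1 +
          (1 : ℝ) * x 1 0 * x 2 0 * hrank 2 1 0 2 -
          (1 : ℝ) * x 1 0 * x 2 1 * hrank 2 0 0 2 +
          (1 : ℝ) * x 1 0 * x 2 2 * hrank 2 0 0 1 -
          (1 : ℝ) * x 2 0 * x 2 0 * hrank 1 1 0 2 +
          (1 : ℝ) * x 2 0 * x 2 1 * hrank 1 0 0 2 -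
          (1 : ℝ) * x 2 0 * x 2 2 * hrank 1 0 0 1
    · show y.adjugate 0 1 = (∑ p : Fin 3, ∑ q : Fin 3, Δ p q * G q p) * G 1 0
      simp only [key, hΔ, Matrix.of_apply, Fin.sum_univ_three, Matrix.adjugate_fin_three,
        Matrix.add_apply, Matrix.cons_val', Matrix.cons_val_zero, Matrix.cons_val_one,
        Matrix.head_cons, Matrix.empty_val', Matrix.cons_val_fin_one, Matrix.head_fin_const,
        Fin.isValue]
      norm_num [Matrix.single, Fin.ext_iff, Matrix.vecHead, Matrix.vecTail, Matrix.cons_val_two,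
        Function.comp]
      linear_combination
          (-1 : ℝ) * x 0 0 * x 0 1 * hrank 2 1 1 2 +
          (1 : ℝ) * x 0 0 * x 1 1 * hrank 2 1 0 2 -
          (1 : ℝ) * x 0 0 * x 2 1 * hrank 1 1 0 2 +
          (1 : ℝ) * x 0 1 * x 0 1 * hrank 2 0 1 2 -
          (1 : ℝ) * x 0 1 * x 0 2 * hrank 2 0 1 1 -
          (1 : ℝ) * x 0 1 * x 1 1 * hrank 2 0 0 2 +
          (1 : ℝ) * x 0 1 * x 2 1 * hrank 1 0 0 2 +
          (1 : ℝ) * x 0 2 * x 1 1 * hrank 2 0 0 1 -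
          (1 : ℝ) * x 0 2 * x 2 1 * hrank 1 0 0 1
    · show y.adjugate 1 1 = (∑ p : Fin 3, ∑ q : Fin 3, Δ p q * G q p) * G 1 1
      simp only [key, hΔ, Matrix.of_apply, Fin.sum_univ_three, Matrix.adjugate_fin_three,
        Matrix.add_apply, Matrix.cons_val', Matrix.cons_val_zero, Matrix.cons_val_one,
        Matrix.head_cons, Matrix.empty_val', Matrix.cons_val_fin_one, Matrix.head_fin_const,
        Fin.isValue]
      norm_num [Matrix.single, Fin.ext_iff, Matrix.vecHead, Matrix.vecTail, Matrix.cons_val_two,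
        Function.comp]
      linear_combination
          (-1 : ℝ) * x 0 1 * x 1 0 * hrank 2 1 1 2 +
          (1 : ℝ) * x 0 1 * x 1 1 * hrank 2 0 1 2 -
          (1 : ℝ) * x 0 1 * x 1 2 * hrank 2 0 1 1 +
          (1 : ℝ) * x 1 0 * x 1 1 * hrank 2 1 0 2 -
          (1 : ℝ) * x 1 0 * x 2 1 * hrank 1 1 0 2 -
          (1 : ℝ) * x 1 1 * x 1 1 * hrank 2 0 0 2 +
          (1 : ℝ) * x 1 1 * x 1 2 * hrank 2 0 0 1 +
          (1 : ℝ) * x 1 1 * x 2 1 * hrank 1 0 0 2 -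
          (1 : ℝ) * x 1 2 * x 2 1 * hrank 1 0 0 1
    · show y.adjugate 2 1 = (∑ p : Fin 3, ∑ q : Fin 3, Δ p q * G q p) * G 1 2
      simp only [key, hΔ, Matrix.of_apply, Fin.sum_univ_three, Matrix.adjugate_fin_three,
        Matrix.add_apply, Matrix.cons_val', Matrix.cons_val_zero, Matrix.cons_val_one,
        Matrix.head_cons, Matrix.empty_val', Matrix.cons_val_fin_one, Matrix.head_fin_const,
        Fin.isValue]
      norm_num [Matrix.single, Fin.ext_iff, Matrix.vecHead, Matrix.vecTail, Matrix.cons_val_two,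
        Function.comp]
      linear_combination
          (-1 : ℝ) * x 0 1 * x 2 0 * hrank 2 1 1 2 +
          (1 : ℝ) * x 0 1 * x 2 1 * hrank 2 0 1 2 -
          (1 : ℝ) * x 0 1 * x 2 2 * hrank 2 0 1 1 +
          (1 : ℝ) * x 1 1 * x 2 0 * hrank 2 1 0 2 -
          (1 : ℝ) * x 1 1 * x 2 1 * hrank 2 0 0 2 +
          (1 : ℝ) * x 1 1 * x 2 2 * hrank 2 0 0 1 -
          (1 : ℝ) * x 2 0 * x 2 1 * hrank 1 1 0 2 +
          (1 : ℝ) * x 2 1 * x 2 1 * hrank 1 0 0 2 -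
          (1 : ℝ) * x 2 1 * x 2 2 * hrank 1 0 0 1
    · show y.adjugate 0 2 = (∑ p : Fin 3, ∑ q : Fin 3, Δ p q * G q p) * G 2 0
      simp only [key, hΔ, Matrix.of_apply, Fin.sum_univ_three, Matrix.adjugate_fin_three,
        Matrix.add_apply, Matrix.cons_val', Matrix.cons_val_zero, Matrix.cons_val_one,
        Matrix.head_cons, Matrix.empty_val', Matrix.cons_val_fin_one, Matrix.head_fin_const,
        Fin.isValue]
      norm_num [Matrix.single, Fin.ext_iff, Matrix.vecHead, Matrix.vecTail, Matrix.cons_val_two,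
        Function.comp]
      linear_combination
          (-1 : ℝ) * x 0 0 * x 0 2 * hrank 2 1 1 2 +
          (1 : ℝ) * x 0 0 * x 1 2 * hrank 2 1 0 2 -
          (1 : ℝ) * x 0 0 * x 2 2 * hrank 1 1 0 2 +
          (1 : ℝ) * x 0 1 * x 0 2 * hrank 2 0 1 2 -
          (1 : ℝ) * x 0 1 * x 1 2 * hrank 2 0 0 2 +
          (1 : ℝ) * x 0 1 * x 2 2 * hrank 1 0 0 2 -
          (1 : ℝ) * x 0 2 * x 0 2 * hrank 2 0 1 1 +
          (1 : ℝ) * x 0 2 * x 1 2 * hrank 2 0 0 1 -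
          (1 : ℝ) * x 0 2 * x 2 2 * hrank 1 0 0 1
    · show y.adjugate 1 2 = (∑ p : Fin 3, ∑ q : Fin 3, Δ p q * G q p) * G 2 1
      simp only [key, hΔ, Matrix.of_apply, Fin.sum_univ_three, Matrix.adjugate_fin_three,
        Matrix.add_apply, Matrix.cons_val', Matrix.cons_val_zero, Matrix.cons_val_one,
        Matrix.head_cons, Matrix.empty_val', Matrix.cons_val_fin_one, Matrix.head_fin_const,
        Fin.isValue]
      norm_num [Matrix.single, Fin.ext_iff, Matrix.vecHead, Matrix.vecTail, Matrix.cons_val_two,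
        Function.comp]
      linear_combination
          (-1 : ℝ) * x 0 2 * x 1 0 * hrank 2 1 1 2 +
          (1 : ℝ) * x 0 2 * x 1 1 * hrank 2 0 1 2 -
          (1 : ℝ) * x 0 2 * x 1 2 * hrank 2 0 1 1 +
          (1 : ℝ) * x 1 0 * x 1 2 * hrank 2 1 0 2 -
          (1 : ℝ) * x 1 0 * x 2 2 * hrank 1 1 0 2 -
          (1 : ℝ) * x 1 1 * x 1 2 * hrank 2 0 0 2 +
          (1 : ℝ) * x 1 1 * x 2 2 * hrank 1 0 0 2 +
          (1 : ℝ) * x 1 2 * x 1 2 * hrank 2 0 0 1 -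
          (1 : ℝ) * x 1 2 * x 2 2 * hrank 1 0 0 1
    · show y.adjugate 2 2 = (∑ p : Fin 3, ∑ q : Fin 3, Δ p q * G q p) * G 2 2
      simp only [key, hΔ, Matrix.of_apply, Fin.sum_univ_three, Matrix.adjugate_fin_three,
        Matrix.add_apply, Matrix.cons_val', Matrix.cons_val_zero, Matrix.cons_val_one,
        Matrix.head_cons, Matrix.empty_val', Matrix.cons_val_fin_one, Matrix.head_fin_const,
        Fin.isValue]
      norm_num [Matrix.single, Fin.ext_iff, Matrix.vecHead, Matrix.vecTail, Matrix.cons_val_two,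
        Function.comp]
      linear_combination
          (-1 : ℝ) * x 0 2 * x 2 0 * hrank 2 1 1 2 +
          (1 : ℝ) * x 0 2 * x 2 1 * hrank 2 0 1 2 -
          (1 : ℝ) * x 0 2 * x 2 2 * hrank 2 0 1 1 +
          (1 : ℝ) * x 1 2 * x 2 0 * hrank 2 1 0 2 -
          (1 : ℝ) * x 1 2 * x 2 1 * hrank 2 0 0 2 +
          (1 : ℝ) * x 1 2 * x 2 2 * hrank 2 0 0 1 -
          (1 : ℝ) * x 2 0 * x 2 2 * hrank 1 1 0 2 +
          (1 : ℝ) * x 2 1 * x 2 2 * hrank 1 0 0 2 -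
          (1 : ℝ) * x 2 2 * x 2 2 * hrank 1 0 0 1
  intro k n
  rw [show α * Φ Δ * G k n = (∑ p : Fin 3, ∑ q : Fin 3, Δ p q * G q p) * G k n by
    rw [hEuler]]
  exact main k n
end
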